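/- Let X and Z be linearly independent subsets of the Boolean group 𝔹 and let Y be suitable for X, with Z ⊆ FS(Y). If the elements of Z have pairwise disjoint X-supports, then FS(Z) is not (X,Y)-adequate (i.e. not ({(X,Y)}, m)-adequate for every m; indeed it is not ({(X,Y)}, 2)-adequate). -/

import Mathlib

open scoped BigOperators

attribute [local instance] Classical.propDecidable

/-- The countable Boolean group, realized as `ℕ →₀ ZMod 2` (equivalently, finite subsets
of ℕ under symmetric difference), a vector space over `𝔽₂ = ZMod 2`. -/
abbrev BoolGrp : Type := ℕ →₀ ZMod 2

/-- The set of finite sums (symmetric differences) of nonempty finite subsets of `X`. -/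
def FSset (X : Set BoolGrp) : Set BoolGrp :=
  {g | ∃ S : Finset BoolGrp, S.Nonempty ∧ ↑S ⊆ X ∧ g = ∑ v ∈ S, v}

/-- The `X`-support of `y`: for linearly independent `X` and `y` in the span of `X`,
the unique finite `S ⊆ X` with `y = ∑_{v ∈ S} v` (junk value `∅` otherwise). -/
noncomputable def Xsupp (X : Set BoolGrp) (y : BoolGrp) : Finset BoolGrp :=
  if h : ∃ S : Finset BoolGrp, ↑S ⊆ X ∧ y = ∑ v ∈ S, v then h.choose else ∅

/-- The `X`-support of a set `Y`: the union of the `X`-supports of its elements. -/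
noncomputable def XsuppSet (X Y : Set BoolGrp) : Set BoolGrp :=
  ⋃ y ∈ Y, (Xsupp X y : Set BoolGrp)

/-- An `m`-witness for the suitability of `Y` for `X`: an `m`-sequence of elements of
`Y` whose `X`-supports pairwise intersect. -/
def SuitWitness (X Y : Set BoolGrp) {m : ℕ} (y : Fin m → BoolGrp) : Prop :=
  (∀ i, y i ∈ Y) ∧ ∀ i j : Fin m, i < j →
    ((Xsupp X (y i) : Set BoolGrp) ∩ (Xsupp X (y j) : Set BoolGrp)).Nonempty

/-- `Y ⊆ FS(X)` is suitable for (linearly independent) `X` if (i) for each `m` there is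
an `m`-witness for suitability, and (ii) whenever the `X`-supports of `y, y' ∈ Y` (not
necessarily distinct) intersect, the intersection is not covered by the `X`-support of
`Y \ {y, y'}`. -/
def Suitable (X Y : Set BoolGrp) : Prop :=
  Y ⊆ FSset X ∧
  (∀ m : ℕ, ∃ y : Fin m → BoolGrp, SuitWitness X Y y) ∧
  ∀ y ∈ Y, ∀ y' ∈ Y,
    ((Xsupp X y : Set BoolGrp) ∩ (Xsupp X y' : Set BoolGrp)).Nonempty →
    (((Xsupp X y : Set BoolGrp) ∩ (Xsupp X y' : Set BoolGrp)) \
      XsuppSet X (Y \ {y, y'})).Nonempty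

/-- The set of finite sums of a finite sequence `a : Fin m → BoolGrp`. -/
def FSfin {m : ℕ} (a : Fin m → BoolGrp) : Set BoolGrp :=
  {g | ∃ s : Finset (Fin m), s.Nonempty ∧ g = ∑ j ∈ s, a j}

/-- `a` is a `(𝒴, m)`-witness for the adequacy of `A`: for each `(X, Y) ∈ 𝒴`,
`FS(a) ⊆ A ∩ FS(Y)` and there is an `m`-witness `y` for the suitability of `Y` such that
for all distinct `j, k`, `y j ∈ Y-supp(a j)` and `y j ∉ Y-supp(a k)`. -/
def AdequateWitness (𝒴 : Set (Set BoolGrp × Set BoolGrp)) (A : Set BoolGrp)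
    {m : ℕ} (a : Fin m → BoolGrp) : Prop :=
  ∀ XY ∈ 𝒴, FSfin a ⊆ A ∩ FSset XY.2 ∧
    ∃ y : Fin m → BoolGrp, SuitWitness XY.1 XY.2 y ∧
      ∀ j k : Fin m, j ≠ k → y j ∈ Xsupp XY.2 (a j) ∧ y j ∉ Xsupp XY.2 (a k)

/-- `A` is `(𝒴, m)`-adequate if there is a `(𝒴, m)`-witness for its adequacy. -/
def Adequate (𝒴 : Set (Set BoolGrp × Set BoolGrp)) (m : ℕ) (A : Set BoolGrp) : Prop :=
  ∃ a : Fin m → BoolGrp, AdequateWitness 𝒴 A a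

/-- `A` is `𝒳`-adequate if it is `(𝒴, m)`-adequate for every finite `𝒴 ⊆ 𝒳` and
every `m`. -/
def XAdequate (𝒳 : Set (Set BoolGrp × Set BoolGrp)) (A : Set BoolGrp) : Prop :=
  ∀ 𝒴 ⊆ 𝒳, 𝒴.Finite → ∀ m : ℕ, Adequate 𝒴 m A

/-- A family of pairs `(X, Y)` with each `X` linearly independent and each `Y` suitable
for `X`. -/
def GoodFamily (𝒳 : Set (Set BoolGrp × Set BoolGrp)) : Prop :=
  ∀ XY ∈ 𝒳, LinearIndependent (ZMod 2) ((↑) : XY.1 → BoolGrp) ∧ Suitable XY.1 XY.2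

open scoped symmDiff

def HasRep (X : Set BoolGrp) (g : BoolGrp) : Prop :=
  ∃ S : Finset BoolGrp, ↑S ⊆ X ∧ g = ∑ v ∈ S, v

lemma Xsupp_spec {X : Set BoolGrp} {g : BoolGrp} (h : HasRep X g) :
    ↑(Xsupp X g) ⊆ X ∧ g = ∑ v ∈ Xsupp X g, v := by
  have h' : ∃ S : Finset BoolGrp, ↑S ⊆ X ∧ g = ∑ v ∈ S, v := h
  rw [Xsupp, dif_pos h']; exact h'.choose_spec

lemma boolgrp_add_self (g : BoolGrp) : g + g = 0 := by
  ext n; simp only [Finsupp.add_apply, Finsupp.coe_zero, Pi.zero_apply]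
  exact CharTwo.add_self_eq_zero _

lemma sum_symmDiff' (S S' : Finset BoolGrp) :
    ∑ v ∈ S ∆ S', v = (∑ v ∈ S, v) + ∑ v ∈ S', v := by
  classical
  have h1 : S ∆ S' = (S ∪ S') \ (S ∩ S') := by
    ext a; simp only [Finset.mem_symmDiff, Finset.mem_sdiff, Finset.mem_union, Finset.mem_inter]; tauto
  have h2 : (∑ v ∈ (S ∪ S') \ (S ∩ S'), v) + ∑ v ∈ S ∩ S', v = ∑ v ∈ S ∪ S', v :=
    Finset.sum_sdiff (Finset.inter_subset_union)
  have h3 : (∑ v ∈ S ∪ S', v) + ∑ v ∈ S ∩ S', v = (∑ v ∈ S, v) + ∑ v ∈ S', v :=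
    Finset.sum_union_inter
  have := boolgrp_add_self (∑ v ∈ S ∩ S', v)
  have key : ∀ a b c : BoolGrp, a + c = b → a = b + c := by
    intro a b c h; rw [← h]; rw [add_assoc, boolgrp_add_self, add_zero]
  rw [h1]
  have h4 := key _ _ _ h2
  rw [h4, ← h3]

lemma sum_eq_zero_iff_empty {X : Set BoolGrp}
    (hX : LinearIndependent (ZMod 2) ((↑) : X → BoolGrp))
    {T : Finset BoolGrp} (hT : ↑T ⊆ X) (h0 : ∑ v ∈ T, v = 0) : T = ∅ := by
  classical
  by_contra hne
  obtain ⟨t, ht⟩ := Finset.nonempty_of_ne_empty hne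
  set l : BoolGrp →₀ ZMod 2 := ∑ v ∈ T, Finsupp.single v 1 with hl
  have hlmem : l ∈ Finsupp.supported (ZMod 2) (ZMod 2) X := by
    rw [Finsupp.mem_supported]
    refine Set.Subset.trans ?_ hT
    intro v hv
    simp only [Finset.mem_coe, Finsupp.mem_support_iff] at hv
    by_contra hvT
    have : l v = 0 := by
      rw [hl, Finsupp.finset_sum_apply]
      refine Finset.sum_eq_zero fun w hw => ?_
      rw [Finsupp.single_apply, if_neg]; rintro rfl; exact hvT hw
    exact hv this
  have htot : (Finsupp.linearCombination (ZMod 2) id) l = 0 := by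
    rw [hl, map_sum]
    simpa [Finsupp.linearCombination_single] using h0
  have hl0 : l = 0 := (linearIndepOn_iff.mp (linearIndependent_subtype_iff.mp hX)) l hlmem htot
  have : l t = 1 := by
    rw [hl, Finsupp.finset_sum_apply]
    rw [Finset.sum_eq_single t]
    · simp
    · intro w hw hwt; rw [Finsupp.single_apply, if_neg hwt]
    · intro h; exact absurd ht h
  rw [hl0] at this; simp at this

lemma rep_unique {X : Set BoolGrp}
    (hX : LinearIndependent (ZMod 2) ((↑) : X → BoolGrp))
    {S S' : Finset BoolGrp} (hS : ↑S ⊆ X) (hS' : ↑S' ⊆ X)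
    (h : ∑ v ∈ S, v = ∑ v ∈ S', v) : S = S' := by
  have h0 : ∑ v ∈ S ∆ S', v = 0 := by
    rw [sum_symmDiff', h, boolgrp_add_self]
  have hsub : ↑(S ∆ S') ⊆ X := by
    intro a ha
    rw [Finset.mem_coe, Finset.mem_symmDiff] at ha
    rcases ha with ⟨h1, _⟩ | ⟨h1, _⟩
    · exact hS h1
    · exact hS' h1
  have := sum_eq_zero_iff_empty hX hsub h0
  have : S ∆ S' = (⊥ : Finset BoolGrp) := this
  exact symmDiff_eq_bot.mp this

lemma Xsupp_eq {X : Set BoolGrp} (hX : LinearIndependent (ZMod 2) ((↑) : X → BoolGrp))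
    {S : Finset BoolGrp} {g : BoolGrp} (hS : ↑S ⊆ X) (hg : g = ∑ v ∈ S, v) :
    Xsupp X g = S := by
  obtain ⟨h1, h2⟩ := Xsupp_spec (X := X) (g := g) ⟨S, hS, hg⟩
  exact rep_unique hX h1 hS (by rw [← h2, hg])

lemma hasRep_zero (X : Set BoolGrp) : HasRep X 0 := ⟨∅, by simp, by simp⟩

lemma hasRep_add {X : Set BoolGrp} {u v : BoolGrp} (hu : HasRep X u) (hv : HasRep X v) :
    HasRep X (u + v) := by
  obtain ⟨S, hS, rfl⟩ := hu
  obtain ⟨S', hS', rfl⟩ := hv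
  refine ⟨S ∆ S', ?_, (sum_symmDiff' S S').symm⟩
  intro a ha
  rw [Finset.mem_coe, Finset.mem_symmDiff] at ha
  rcases ha with ⟨h1, _⟩ | ⟨h1, _⟩
  · exact hS h1
  · exact hS' h1

lemma hasRep_sum {X : Set BoolGrp} {T : Finset BoolGrp} (hT : ∀ y ∈ T, HasRep X y) :
    HasRep X (∑ y ∈ T, y) := by
  classical
  induction T using Finset.induction_on with
  | empty => simpa using hasRep_zero X
  | insert _ _ hnot ih =>
    rename_i a T'
    rw [Finset.sum_insert hnot]
    exact hasRep_add (hT a (Finset.mem_insert_self _ _))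
      (ih fun y hy => hT y (Finset.mem_insert_of_mem hy))

lemma Xsupp_add {X : Set BoolGrp} (hX : LinearIndependent (ZMod 2) ((↑) : X → BoolGrp))
    {u v : BoolGrp} (hu : HasRep X u) (hv : HasRep X v) :
    Xsupp X (u + v) = Xsupp X u ∆ Xsupp X v := by
  obtain ⟨hu1, hu2⟩ := Xsupp_spec hu
  obtain ⟨hv1, hv2⟩ := Xsupp_spec hv
  refine Xsupp_eq hX ?_ ?_
  · intro a ha
    rw [Finset.mem_coe, Finset.mem_symmDiff] at ha
    rcases ha with ⟨h1, _⟩ | ⟨h1, _⟩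
    · exact hu1 h1
    · exact hv1 h1
  · rw [sum_symmDiff', ← hu2, ← hv2]

lemma Xsupp_zero {X : Set BoolGrp} (hX : LinearIndependent (ZMod 2) ((↑) : X → BoolGrp)) :
    Xsupp X 0 = ∅ := Xsupp_eq hX (by simp) (by simp)

lemma not_mem_Xsupp_sum {X : Set BoolGrp}
    (hX : LinearIndependent (ZMod 2) ((↑) : X → BoolGrp))
    {T : Finset BoolGrp} (hT : ∀ y ∈ T, HasRep X y) {x : BoolGrp}
    (hx : ∀ y ∈ T, x ∉ Xsupp X y) : x ∉ Xsupp X (∑ y ∈ T, y) := by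
  classical
  induction T using Finset.induction_on with
  | empty => rw [Finset.sum_empty, Xsupp_zero hX]; simp
  | insert _ _ hnot ih =>
    rename_i a T'
    rw [Finset.sum_insert hnot,
      Xsupp_add hX (hT a (Finset.mem_insert_self _ _))
        (hasRep_sum fun y hy => hT y (Finset.mem_insert_of_mem hy))]
    rw [Finset.mem_symmDiff]
    push_neg
    constructor
    · intro h; exact absurd h (hx a (Finset.mem_insert_self _ _))
    · intro h
      exact absurd h (ih (fun y hy => hT y (Finset.mem_insert_of_mem hy))
        (fun y hy => hx y (Finset.mem_insert_of_mem hy)))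

lemma mem_Xsupp_sum {X : Set BoolGrp}
    (hX : LinearIndependent (ZMod 2) ((↑) : X → BoolGrp))
    {T : Finset BoolGrp} (hT : ∀ y ∈ T, HasRep X y) {x y₀ : BoolGrp}
    (hy₀ : y₀ ∈ T) (hxy₀ : x ∈ Xsupp X y₀)
    (hx : ∀ y ∈ T, y ≠ y₀ → x ∉ Xsupp X y) : x ∈ Xsupp X (∑ y ∈ T, y) := by
  classical
  rw [← Finset.add_sum_erase T _ hy₀,
    Xsupp_add hX (hT y₀ hy₀) (hasRep_sum fun y hy => hT y (Finset.mem_of_mem_erase hy))]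
  rw [Finset.mem_symmDiff]
  left
  refine ⟨hxy₀, not_mem_Xsupp_sum hX (fun y hy => hT y (Finset.mem_of_mem_erase hy)) ?_⟩
  intro y hy
  exact hx y (Finset.mem_of_mem_erase hy) (Finset.ne_of_mem_erase hy)

/-- If `X`, `Z` are linearly independent, `Y` is suitable for `X`, `Z ⊆ FS(Y)`, and the
elements of `Z` have pairwise disjoint `X`-supports, then `FS(Z)` is not
`({(X,Y)}, 2)`-adequate (in particular, not `(X,Y)`-adequate). -/
theorem not_adequate_of_pairwiseDisjoint_supports (X Y Z : Set BoolGrp)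
    (hX : LinearIndependent (ZMod 2) ((↑) : X → BoolGrp))
    (hZ : LinearIndependent (ZMod 2) ((↑) : Z → BoolGrp))
    (hY : Suitable X Y) (hZY : Z ⊆ FSset Y)
    (hdisj : ∀ z ∈ Z, ∀ z' ∈ Z, z ≠ z' → Disjoint (Xsupp X z) (Xsupp X z')) :
    ¬ Adequate {(X, Y)} 2 (FSset Z) := by
  rintro ⟨a, hwit⟩
  obtain ⟨hFS, y, ⟨hyY, hyint⟩, hyk⟩ := hwit (X, Y) rfl
  set y0 := y 0 with hy0def
  set y1 := y 1 with hy1def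
  have h01 := hyk 0 1 (by decide)
  have h10 := hyk 1 0 (by decide)
  have ha : ∀ j : Fin 2, a j ∈ FSset Z ∩ FSset Y := by
    intro j
    exact hFS ⟨{j}, Finset.singleton_nonempty j, by simp⟩
  have hYrep : ∀ w ∈ Y, HasRep X w := by
    intro w hw
    obtain ⟨S, _, hsub, hsum⟩ := hY.1 hw
    exact ⟨S, hsub, hsum⟩
  have hZrepX : ∀ z ∈ Z, HasRep X z := by
    intro z hz
    obtain ⟨U, _, hUsub, hUsum⟩ := hZY hz
    rw [hUsum]
    exact hasRep_sum fun w hw => hYrep w (hUsub hw)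
  have haYrep : ∀ j : Fin 2, HasRep Y (a j) := by
    intro j
    obtain ⟨S, _, hsub, hsum⟩ := (ha j).2
    exact ⟨S, hsub, hsum⟩
  have hT : ∀ j : Fin 2, ↑(Xsupp Y (a j)) ⊆ Y ∧ a j = ∑ v ∈ Xsupp Y (a j), v :=
    fun j => Xsupp_spec (haYrep j)
  obtain ⟨S0, _, hS0Z, hS0sum⟩ := (ha 0).1
  obtain ⟨S1, _, hS1Z, hS1sum⟩ := (ha 1).1
  obtain ⟨xb, hxbmem, hxbout⟩ := hY.2.2 y0 (hyY 0) y1 (hyY 1) (hyint 0 1 (by decide))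
  have hxb0 : xb ∈ Xsupp X y0 := hxbmem.1
  have hxb1 : xb ∈ Xsupp X y1 := hxbmem.2
  have hxb3 : ∀ w ∈ Y, w ≠ y0 → w ≠ y1 → xb ∉ Xsupp X w := by
    intro w hw hw0 hw1 hmem
    exact hxbout (Set.mem_biUnion ⟨hw, by simp [hw0, hw1]⟩ hmem)
  have hexcl : ∀ w ∈ Y, (Xsupp X w).Nonempty →
      ∃ x, x ∈ Xsupp X w ∧ ∀ w' ∈ Y, w' ≠ w → x ∉ Xsupp X w' := by
    intro w hw hwne
    obtain ⟨x, hxmem, hxout⟩ := hY.2.2 w hw w hw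
      ⟨hwne.choose, by simpa using (Finset.mem_coe.mpr hwne.choose_spec)⟩
    refine ⟨x, by simpa using hxmem.1, ?_⟩
    intro w' hw' hww' hmem
    refine hxout (Set.mem_biUnion ⟨hw', ?_⟩ hmem)
    simp [hww']
  have hsuppne : ∀ w ∈ Y, (Xsupp X w).Nonempty := by
    intro w hw
    obtain ⟨S, hSne, hsub, hsum⟩ := hY.1 hw
    rw [Xsupp_eq hX hsub hsum]
    exact hSne
  obtain ⟨x0, hx0mem, hx0out⟩ := hexcl y0 (hyY 0) (hsuppne y0 (hyY 0))
  obtain ⟨x1, hx1mem, hx1out⟩ := hexcl y1 (hyY 1) (hsuppne y1 (hyY 1))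
  -- Step A : xb ∈ Xsupp X (a j)
  have hstepA : ∀ j : Fin 2, ∀ yj yo : BoolGrp, yj ∈ Xsupp Y (a j) → yo ∉ Xsupp Y (a j) →
      xb ∈ Xsupp X yj → (∀ w ∈ Y, w ≠ yj → w ≠ yo → xb ∉ Xsupp X w) →
      xb ∈ Xsupp X (a j) := by
    intro j yj yo hjmem homem hxbj hout
    rw [(hT j).2]
    refine mem_Xsupp_sum hX (fun w hw => hYrep w ((hT j).1 hw)) hjmem hxbj ?_
    intro w hw hwne
    refine hout w ((hT j).1 hw) hwne ?_
    rintro rfl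
    exact homem hw
  have hA0 : xb ∈ Xsupp X (a 0) :=
    hstepA 0 y0 y1 h01.1 h10.2 hxb0 hxb3
  have hA1 : xb ∈ Xsupp X (a 1) :=
    hstepA 1 y1 y0 h10.1 h01.2 hxb1 (fun w hw h1 h0 => hxb3 w hw h0 h1)
  -- Step B : find z0 ∈ S0 ∩ S1 with xb ∈ Xsupp X z0
  have hfind : ∀ (S : Finset BoolGrp), ↑S ⊆ Z → ∀ g : BoolGrp, xb ∈ Xsupp X g →
      g = ∑ v ∈ S, v → ∃ z ∈ S, xb ∈ Xsupp X z := by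
    intro S hSZ g hg hsum
    by_contra hcon
    push_neg at hcon
    have := not_mem_Xsupp_sum hX (fun z hz => hZrepX z (hSZ hz)) hcon
    rw [← hsum] at this
    exact this hg
  obtain ⟨z0, hz0S0, hxbz0⟩ := hfind S0 hS0Z (a 0) hA0 hS0sum
  obtain ⟨z1, hz1S1, hxbz1⟩ := hfind S1 hS1Z (a 1) hA1 hS1sum
  have hz01 : z0 = z1 := by
    by_contra hzz
    exact (Finset.disjoint_left.mp
      (hdisj z0 (hS0Z hz0S0) z1 (hS1Z hz1S1) hzz)) hxbz0 hxbz1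
  subst hz01
  -- Step C : analyze the Y-representation of z0
  have hz0Z : z0 ∈ Z := hS0Z hz0S0
  have hz0repY : HasRep Y z0 := by
    obtain ⟨U, _, hUsub, hUsum⟩ := hZY hz0Z
    exact ⟨U, hUsub, hUsum⟩
  obtain ⟨hUsub, hUsum⟩ := Xsupp_spec hz0repY
  set U := Xsupp Y z0 with hUdef
  have hCfinal : ∀ (xe ye : BoolGrp), xe ∈ Xsupp X ye →
      (∀ w ∈ Y, w ≠ ye → xe ∉ Xsupp X w) → ye ∈ U →
      ∀ (S : Finset BoolGrp), ↑S ⊆ Z → z0 ∈ S → ∀ j : Fin 2, a j = ∑ v ∈ S, v →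
      ye ∉ Xsupp Y (a j) → False := by
    intro xe ye hxeye hxeout hyeU S hSZ hz0S j hsum hyeT
    have hxez0 : xe ∈ Xsupp X z0 := by
      rw [hUsum]
      refine mem_Xsupp_sum hX (fun w hw => hYrep w (hUsub hw)) hyeU hxeye ?_
      intro w hw hwne
      exact hxeout w (hUsub hw) hwne
    have hxeaj : xe ∈ Xsupp X (a j) := by
      rw [hsum]
      refine mem_Xsupp_sum hX (fun z hz => hZrepX z (hSZ hz)) hz0S hxez0 ?_
      intro z hz hzne
      intro h
      exact (Finset.disjoint_left.mp (hdisj z (hSZ hz) z0 hz0Z hzne)) h hxez0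
    refine absurd hxeaj ?_
    rw [(hT j).2]
    refine not_mem_Xsupp_sum hX (fun w hw => hYrep w ((hT j).1 hw)) ?_
    intro w hw
    refine hxeout w ((hT j).1 hw) ?_
    rintro rfl
    exact hyeT hw
  by_cases hy0U : y0 ∈ U
  · exact hCfinal x0 y0 hx0mem hx0out hy0U S1 hS1Z hz1S1 1 hS1sum h01.2
  by_cases hy1U : y1 ∈ U
  · exact hCfinal x1 y1 hx1mem hx1out hy1U S0 hS0Z hz0S0 0 hS0sum h10.2
  · refine absurd hxbz0 ?_
    rw [hUsum]
    refine not_mem_Xsupp_sum hX (fun w hw => hYrep w (hUsub hw)) ?_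
    intro w hw
    refine hxb3 w (hUsub hw) ?_ ?_
    · rintro rfl; exact hy0U hw
    · rintro rfl; exact hy1U hw
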